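/- Let A_1,...,A_k be monotone sequences in a linear order, all monotone in the same direction, such that each consecutive pair A_i, A_{i+1} is bundled (strongly interleaves via a common-color non-crossing matching), and such that A_1 and A_k are both fanned of the same color c (with no two color-c edges crossing). Then the common length of the sequences is at most 2^k·10. -/

import Mathlib

variable {α : Type*}

def AltUp [LinearOrder α] {n : ℕ} (a b : Fin n → α) : Prop :=
  (∀ i, a i < b i) ∧ ∀ i j : Fin n, (i : ℕ) + 1 = (j : ℕ) → b i < a j

def AltDown [LinearOrder α] {n : ℕ} (a b : Fin n → α) : Prop :=
  (∀ i, b i < a i) ∧ ∀ i j : Fin n, (i : ℕ) + 1 = (j : ℕ) → a j < b i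

/-- Two equal-length sequences strongly interleave: their elements strictly
alternate in the linear order (in one of the four possible patterns). -/
def StrongInt [LinearOrder α] {n : ℕ} (a b : Fin n → α) : Prop :=
  AltUp a b ∨ AltUp b a ∨ AltDown a b ∨ AltDown b a

/-- Two sequences are monotone in the same direction. -/
def SameDir [LinearOrder α] {n m : ℕ} (a : Fin n → α) (b : Fin m → α) : Prop :=
  (StrictMono a ∧ StrictMono b) ∨ (StrictAnti a ∧ StrictAnti b)

/-- Two sequences `k`-interleave: they are monotone in the same direction and
admit length-`k` subsequences that strongly interleave. -/
def KInterleave [LinearOrder α] (k : ℕ) {n m : ℕ} (a : Fin n → α) (b : Fin m → α) : Prop :=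
  SameDir a b ∧ ∃ f : Fin k → Fin n, ∃ g : Fin k → Fin m,
    StrictMono f ∧ StrictMono g ∧ StrongInt (a ∘ f) (b ∘ g)

/-- The (unordered) edges `{x,y}` and `{z,w}` cross with respect to the linear order. -/
def EdgeCross [LinearOrder α] (x y z w : α) : Prop :=
  (min x y < min z w ∧ min z w < max x y ∧ max x y < max z w) ∨
  (min z w < min x y ∧ min x y < max z w ∧ max z w < max x y)

/-- The rainbow configuration: the sequences are monotone in opposite directions
and totally separated. -/
def RainbowPat [LinearOrder α] {n : ℕ} (a b : Fin n → α) : Prop :=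
  ((StrictMono a ∧ StrictAnti b) ∨ (StrictAnti a ∧ StrictMono b)) ∧
  ((∀ i j, a i < b j) ∨ (∀ i j, b j < a i))

section Aux
variable [LinearOrder α]

lemma ec_comm {x y z w : α} : EdgeCross x y z w ↔ EdgeCross z w x y := by
  unfold EdgeCross; tauto

lemma ec_swapl {x y z w : α} : EdgeCross x y z w ↔ EdgeCross y x z w := by
  unfold EdgeCross; rw [min_comm x y, max_comm x y]

lemma ec_swapr {x y z w : α} : EdgeCross x y z w ↔ EdgeCross x y w z := by
  unfold EdgeCross; rw [min_comm z w, max_comm z w]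

lemma ec_of_chain {a b c d : α} (h1 : a < b) (h2 : b < c) (h3 : c < d) :
    EdgeCross a c b d := by
  left
  rw [min_eq_left (h1.trans h2).le, min_eq_left (h2.trans h3).le,
    max_eq_right (h1.trans h2).le, max_eq_right (h2.trans h3).le]
  exact ⟨h1, h2, h3⟩

lemma ec_dual {x y z w : α} :
    EdgeCross (OrderDual.toDual x) (OrderDual.toDual y) (OrderDual.toDual z)
      (OrderDual.toDual w) ↔ EdgeCross x y z w := by
  show ((max x y > max z w ∧ _ ∧ _) ∨ _) ↔ _
  unfold EdgeCross
  constructor <;> (rintro (⟨h1, h2, h3⟩ | ⟨h1, h2, h3⟩)) <;>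
    [right; left; right; left] <;> exact ⟨h3, h2, h1⟩

/-- A bundled pair (pointwise below, non-crossing matching, both increasing)
fully alternates. -/
lemma bundle_alt {L : ℕ} {a b : Fin L → α} (ha : StrictMono a) (hb : StrictMono b)
    (hlt : ∀ i, a i < b i) (hne : ∀ i j, a i ≠ b j)
    (hcr : ∀ i j, ¬ EdgeCross (a i) (b i) (a j) (b j)) : AltUp a b := by
  refine ⟨hlt, fun i j hij => ?_⟩
  by_contra hle
  push_neg at hle
  have hij' : i < j := by
    rw [Fin.lt_def]; omega
  have haj : a j < b i := lt_of_le_of_ne hle (hne j i)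
  apply hcr i j
  left
  rw [min_eq_left (hlt i).le, min_eq_left (hlt j).le,
    max_eq_right (hlt i).le, max_eq_right (hlt j).le]
  exact ⟨ha hij', haj, hb hij'⟩

/-- Restrict an alternation along a strictly monotone reindexing. -/
lemma altup_sub {L m : ℕ} {a b : Fin L → α} (ha : StrictMono a)
    (h : AltUp a b) (g : Fin m → Fin L) (hg : StrictMono g) :
    AltUp (a ∘ g) (b ∘ g) := by
  refine ⟨fun i => h.1 (g i), fun i j hij => ?_⟩
  have hij' : i < j := by rw [Fin.lt_def]; omega
  have hgg : g i < g j := hg hij'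
  have h1 : ((g i : ℕ) + 1) < L := by
    have := hgg; rw [Fin.lt_def] at this
    omega
  have h2 : b (g i) < a ⟨(g i : ℕ) + 1, h1⟩ := h.2 (g i) ⟨(g i : ℕ) + 1, h1⟩ rfl
  refine h2.trans_le (ha.monotone ?_)
  rw [Fin.le_def]
  have := hgg; rw [Fin.lt_def] at this
  simpa using this

/-- Chain two alternations, halving the length. -/
lemma chain_alt {m m' : ℕ} (hm : 2 * m' ≤ m) {x y z : Fin m → α}
    (hxy : AltUp x y ∨ AltUp y x) (hyz : AltUp y z ∨ AltUp z y) :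
    ∃ f g : Fin m' → Fin m, StrictMono f ∧ StrictMono g ∧
      (AltUp (x ∘ f) (z ∘ g) ∨ AltUp (z ∘ g) (x ∘ f)) := by
  have he : ∀ i : Fin m', 2 * (i : ℕ) < m := fun i => by omega
  have ho : ∀ i : Fin m', 2 * (i : ℕ) + 1 < m := fun i => by omega
  set ev : Fin m' → Fin m := fun i => ⟨2 * i, he i⟩ with hev
  set od : Fin m' → Fin m := fun i => ⟨2 * i + 1, ho i⟩ with hod
  have hevm : StrictMono ev := fun i j hij => by
    rw [Fin.lt_def] at *; simp only [ev]; omega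
  have hodm : StrictMono od := fun i j hij => by
    rw [Fin.lt_def] at *; simp only [od]; omega
  rcases hxy with hxy | hxy <;> rcases hyz with hyz | hyz
  · refine ⟨ev, ev, hevm, hevm, Or.inl ⟨fun i => (hxy.1 (ev i)).trans (hyz.1 (ev i)), ?_⟩⟩
    intro i j hij
    have h1 : z (ev i) < y (od i) := hyz.2 (ev i) (od i) rfl
    have h2 : y (od i) < x (ev j) := hxy.2 (od i) (ev j) (by simp [ev, od]; omega)
    exact h1.trans h2
  · refine ⟨ev, od, hevm, hodm, Or.inl ⟨?_, ?_⟩⟩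
    · intro i
      exact (hxy.1 (ev i)).trans (hyz.2 (ev i) (od i) rfl)
    · intro i j hij
      exact (hyz.1 (od i)).trans (hxy.2 (od i) (ev j) (by simp [ev, od]; omega))
  · refine ⟨ev, od, hevm, hodm, Or.inl ⟨?_, ?_⟩⟩
    · intro i
      exact (hxy.2 (ev i) (od i) rfl).trans (hyz.1 (od i))
    · intro i j hij
      exact (hyz.2 (od i) (ev j) (by simp [ev, od]; omega)).trans (hxy.1 (ev j))
  · refine ⟨ev, ev, hevm, hevm, Or.inr ⟨fun i => (hyz.1 (ev i)).trans (hxy.1 (ev i)), ?_⟩⟩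
    intro i j hij
    have h1 : x (ev i) < y (od i) := hxy.2 (ev i) (od i) rfl
    have h2 : y (od i) < z (ev j) := hyz.2 (od i) (ev j) (by simp [ev, od]; omega)
    exact h1.trans h2

/-- Bottom region. -/
lemma pf0 {u v A1 C1 A2 C2 : α} (huv : u ≠ v)
    (hcr1 : ¬ EdgeCross A1 u C1 v) (hcr2 : ¬ EdgeCross A2 u C2 v)
    (h1 : A1 < C1) (h2 : C2 < A2)
    (hb1 : C1 < min u v) (hb2 : A2 < min u v) : False := by
  rcases huv.lt_or_gt with h | h
  · rw [min_eq_left h.le] at hb1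
    exact hcr1 (ec_of_chain h1 hb1 h)
  · rw [min_eq_right h.le] at hb2
    exact hcr2 (ec_comm.mp (ec_of_chain h2 hb2 h))

/-- Middle region. -/
lemma pf1 {u v A1 C1 A2 C2 : α} (huv : u ≠ v)
    (hcr1 : ¬ EdgeCross A1 u C1 v) (hcr2 : ¬ EdgeCross A2 u C2 v)
    (h1 : A1 < C1) (h2 : C2 < A2)
    (hm1 : min u v < A1) (hm2 : C1 < max u v)
    (hm3 : min u v < C2) (hm4 : A2 < max u v) : False := by
  rcases huv.lt_or_gt with h | h
  · rw [min_eq_left h.le] at hm3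
    rw [max_eq_right h.le] at hm4
    exact hcr2 (ec_swapl.mp (ec_of_chain hm3 h2 hm4))
  · rw [min_eq_right h.le] at hm1
    rw [max_eq_left h.le] at hm2
    exact hcr1 (ec_swapr.mp (ec_comm.mp (ec_of_chain hm1 h1 hm2)))

/-- Top region. -/
lemma pf2 {u v A1 C1 A2 C2 : α} (huv : u ≠ v)
    (hcr1 : ¬ EdgeCross A1 u C1 v) (hcr2 : ¬ EdgeCross A2 u C2 v)
    (h1 : A1 < C1) (h2 : C2 < A2)
    (ht1 : max u v < A1) (ht2 : max u v < C2) : False := by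
  rcases huv.lt_or_gt with h | h
  · rw [max_eq_right h.le] at ht1
    exact hcr1 (ec_swapr.mp (ec_swapl.mp (ec_of_chain h ht1 h1)))
  · rw [max_eq_left h.le] at ht2
    exact hcr2 (ec_swapr.mp (ec_swapl.mp (ec_comm.mp (ec_of_chain h ht2 h2))))

/-- Seven strictly increasing points alternating between the `u`-fan family and
the `v`-fan family force a crossing. -/
lemma seven_points {u v : α} (huv : u ≠ v) (x : Fin 7 → α) (fam : Fin 7 → Bool)
    (hm : StrictMono x)
    (hne : ∀ t, x t ≠ u ∧ x t ≠ v)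
    (halt : ∀ t s : Fin 7, (t : ℕ) + 1 = (s : ℕ) → fam t ≠ fam s)
    (hcr : ∀ s t, fam s = true → fam t = false → ¬ EdgeCross (x s) u (x t) v) :
    False := by
  classical
  set r : Fin 7 → ℕ := fun t => if x t < min u v then 0 else if x t < max u v then 1 else 2
    with hr
  have hrmono : ∀ s t : Fin 7, s ≤ t → r s ≤ r t := by
    intro s t hst
    have hxst : x s ≤ x t := hm.monotone hst
    simp only [r]
    split_ifs <;>
      first
        | omega
        | (exact absurd (lt_of_le_of_lt hxst (by assumption)) (by assumption))
  have hrle : ∀ t, r t ≤ 2 := by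
    intro t; simp only [r]; split_ifs <;> omega
  have hneq : ∀ t : Fin 7, x t ≠ min u v ∧ x t ≠ max u v := by
    intro t
    obtain ⟨h1, h2⟩ := hne t
    constructor
    · rcases min_choice u v with h | h <;> rw [h] <;> assumption
    · rcases max_choice u v with h | h <;> rw [h] <;> assumption
  have hr0 : ∀ t, r t = 0 → x t < min u v := by
    intro t ht; simp only [r] at ht; split_ifs at ht <;> first | assumption | omega
  have hr1 : ∀ t, r t = 1 → min u v < x t ∧ x t < max u v := by
    intro t ht; simp only [r] at ht
    split_ifs at ht with h1 h2 <;> try omega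
    exact ⟨lt_of_le_of_ne (not_lt.mp h1) (Ne.symm (hneq t).1), h2⟩
  have hr2 : ∀ t, r t = 2 → max u v < x t := by
    intro t ht; simp only [r] at ht
    split_ifs at ht with h1 h2 <;> try omega
    exact lt_of_le_of_ne (not_lt.mp h2) (Ne.symm (hneq t).2)
  have key : ∀ t1 t2 t3 : Fin 7, fam t1 ≠ fam t2 → fam t2 ≠ fam t3 →
      x t1 < x t2 → x t2 < x t3 → r t1 = r t2 → r t2 = r t3 → False := by
    intro t1 t2 t3 hf12 hf23 hx12 hx23 hr12 hr23
    have hpairs : ∃ iA1 jC1 iA2 jC2 : Fin 7,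
        fam iA1 = true ∧ fam jC1 = false ∧ fam iA2 = true ∧ fam jC2 = false ∧
        x iA1 < x jC1 ∧ x jC2 < x iA2 ∧
        r iA1 = r t1 ∧ r jC1 = r t1 ∧ r iA2 = r t1 ∧ r jC2 = r t1 := by
      have h2 : fam t2 = ! fam t1 := by
        revert hf12; cases fam t1 <;> cases fam t2 <;> decide
      have h3 : fam t3 = fam t1 := by
        revert hf23 h2; cases fam t1 <;> cases fam t2 <;> cases fam t3 <;> decide
      cases hft : fam t1
      · rw [hft, Bool.not_false] at h2
        rw [hft] at h3
        exact ⟨t2, t3, t2, t1, h2, h3, h2, hft, hx23, hx12, hr12.symm,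
          (hr12.trans hr23).symm, hr12.symm, rfl⟩
      · rw [hft, Bool.not_true] at h2
        rw [hft] at h3
        exact ⟨t1, t2, t3, t2, hft, h2, h3, h2, hx12, hx23, rfl, hr12.symm,
          (hr12.trans hr23).symm, hr12.symm⟩
    obtain ⟨iA1, jC1, iA2, jC2, f1, f2, f3, f4, hx1, hx2, e1, e2, e3, e4⟩ := hpairs
    have hv : r t1 = 0 ∨ r t1 = 1 ∨ r t1 = 2 := by have := hrle t1; omega
    rcases hv with h | h | h
    · exact pf0 huv (hcr iA1 jC1 f1 f2) (hcr iA2 jC2 f3 f4) hx1 hx2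
        (hr0 _ (e2.trans h)) (hr0 _ (e3.trans h))
    · exact pf1 huv (hcr iA1 jC1 f1 f2) (hcr iA2 jC2 f3 f4) hx1 hx2
        (hr1 _ (e1.trans h)).1 (hr1 _ (e2.trans h)).2
        (hr1 _ (e4.trans h)).1 (hr1 _ (e3.trans h)).2
    · exact pf2 huv (hcr iA1 jC1 f1 f2) (hcr iA2 jC2 f3 f4) hx1 hx2
        (hr2 _ (e1.trans h)) (hr2 _ (e4.trans h))
  have c01 : r 0 ≤ r 1 := hrmono 0 1 (by decide)
  have c12 : r 1 ≤ r 2 := hrmono 1 2 (by decide)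
  have c23 : r 2 ≤ r 3 := hrmono 2 3 (by decide)
  have c34 : r 3 ≤ r 4 := hrmono 3 4 (by decide)
  have c45 : r 4 ≤ r 5 := hrmono 4 5 (by decide)
  have c56 : r 5 ≤ r 6 := hrmono 5 6 (by decide)
  have hb : r 6 ≤ 2 := hrle 6
  have htriple : (r 0 = r 1 ∧ r 1 = r 2) ∨ (r 1 = r 2 ∧ r 2 = r 3) ∨
      (r 2 = r 3 ∧ r 3 = r 4) ∨ (r 3 = r 4 ∧ r 4 = r 5) ∨ (r 4 = r 5 ∧ r 5 = r 6) := by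
    omega
  have hmlt : ∀ s t : Fin 7, s < t → x s < x t := fun s t h => hm h
  rcases htriple with ⟨e1, e2⟩ | ⟨e1, e2⟩ | ⟨e1, e2⟩ | ⟨e1, e2⟩ | ⟨e1, e2⟩
  · exact key 0 1 2 (halt 0 1 rfl) (halt 1 2 rfl) (hmlt 0 1 (by decide)) (hmlt 1 2 (by decide)) e1 e2
  · exact key 1 2 3 (halt 1 2 rfl) (halt 2 3 rfl) (hmlt 1 2 (by decide)) (hmlt 2 3 (by decide)) e1 e2
  · exact key 2 3 4 (halt 2 3 rfl) (halt 3 4 rfl) (hmlt 2 3 (by decide)) (hmlt 3 4 (by decide)) e1 e2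
  · exact key 3 4 5 (halt 3 4 rfl) (halt 4 5 rfl) (hmlt 3 4 (by decide)) (hmlt 4 5 (by decide)) e1 e2
  · exact key 4 5 6 (halt 4 5 rfl) (halt 5 6 rfl) (hmlt 4 5 (by decide)) (hmlt 5 6 (by decide)) e1 e2

/-- The main theorem in the case where all sequences are strictly increasing. -/
theorem stmt11_mono {k L : ℕ} (hk : 0 < k) (A : Fin k → Fin L → α) (u v : α)
    (hmono : ∀ p, StrictMono (A p))
    (hbundle : ∀ (p : Fin k) (h : (p : ℕ) + 1 < k),
      ((∀ i, A p i < A ⟨(p : ℕ) + 1, h⟩ i) ∨ (∀ i, A ⟨(p : ℕ) + 1, h⟩ i < A p i)) ∧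
      ∀ i j, ¬ EdgeCross (A p i) (A ⟨(p : ℕ) + 1, h⟩ i) (A p j) (A ⟨(p : ℕ) + 1, h⟩ j))
    (hinj : Function.Injective (fun q : Fin k × Fin L => A q.1 q.2))
    (huv : u ≠ v) (hpts : ∀ p i, A p i ≠ u ∧ A p i ≠ v)
    (hfan : ∀ i j, ¬ EdgeCross (A ⟨0, hk⟩ i) u (A ⟨k - 1, Nat.sub_lt hk Nat.one_pos⟩ j) v) :
    L ≤ 2 ^ k * 10 := by
  by_contra hL
  push_neg at hL
  -- full alternation of consecutive bundled pairs
  have halt : ∀ (p : ℕ) (h : p + 1 < k),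
      AltUp (A ⟨p, Nat.lt_of_succ_lt h⟩) (A ⟨p + 1, h⟩) ∨
      AltUp (A ⟨p + 1, h⟩) (A ⟨p, Nat.lt_of_succ_lt h⟩) := by
    intro p h
    obtain ⟨hdir, hcr⟩ := hbundle ⟨p, Nat.lt_of_succ_lt h⟩ h
    have hnep : ∀ i j : Fin L,
        A ⟨p, Nat.lt_of_succ_lt h⟩ i ≠ A ⟨p + 1, h⟩ j := by
      intro i j heq
      have h2 := hinj (a₁ := (⟨p, Nat.lt_of_succ_lt h⟩, i)) (a₂ := (⟨p + 1, h⟩, j)) heq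
      have h3 := congrArg (fun q => (q.1 : ℕ)) h2
      simp at h3
    rcases hdir with hdir | hdir
    · exact Or.inl (bundle_alt (hmono _) (hmono _) hdir hnep hcr)
    · refine Or.inr (bundle_alt (hmono _) (hmono _) hdir (fun i j heq => hnep j i heq.symm) ?_)
      intro i j hc
      exact hcr i j (ec_swapr.mp (ec_swapl.mp hc))
  -- iterated chaining
  rcases Nat.lt_or_ge k 2 with hk2 | hk2
  · -- k = 1
    have hk1 : k = 1 := by omega
    subst hk1
    have h7 : ∀ t : ℕ, t < 7 → t < L := by intro t ht; omega
    set x : Fin 7 → α := fun t => A ⟨0, hk⟩ ⟨t, h7 t t.isLt⟩ with hx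
    have hxm : StrictMono x := by
      intro s t hst
      exact hmono ⟨0, hk⟩ (by rw [Fin.lt_def]; rw [Fin.lt_def] at hst; simpa using hst)
    refine seven_points huv x (fun t => decide ((t : ℕ) % 2 = 0)) hxm
      (fun t => hpts _ _) ?_ ?_
    · intro t s hts
      simp only [ne_eq, decide_eq_decide]
      omega
    · intro s t hs ht
      exact hfan ⟨s, h7 s s.isLt⟩ ⟨t, h7 t t.isLt⟩
  · -- k ≥ 2
    have main : ∀ p : ℕ, 1 ≤ p → ∀ hpk : p < k,
        ∃ f g : Fin (L / 2 ^ (p - 1)) → Fin L, StrictMono f ∧ StrictMono g ∧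
          (AltUp (A ⟨0, hk⟩ ∘ f) (A ⟨p, hpk⟩ ∘ g) ∨
           AltUp (A ⟨p, hpk⟩ ∘ g) (A ⟨0, hk⟩ ∘ f)) := by
      intro p hp
      induction p, hp using Nat.le_induction with
      | base =>
        intro hpk
        have e : L / 2 ^ (1 - 1) = L := by norm_num
        refine ⟨fun i => ⟨i, by have h := i.isLt; omega⟩,
          fun i => ⟨i, by have h := i.isLt; omega⟩, ?_, ?_, ?_⟩
        · intro i j hij; rw [Fin.lt_def] at *; simpa using hij
        · intro i j hij; rw [Fin.lt_def] at *; simpa using hij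
        · rcases halt 0 hpk with h | h
          · exact Or.inl (altup_sub (hmono _) h _ (fun i j hij => by
              rw [Fin.lt_def] at *; simpa using hij))
          · exact Or.inr (altup_sub (hmono _) h _ (fun i j hij => by
              rw [Fin.lt_def] at *; simpa using hij))
      | succ p hp IH =>
        intro hpk1
        have hpk : p < k := by omega
        obtain ⟨f, g, hf, hg, hfg⟩ := IH hpk
        have hb := halt p hpk1
        have hy : AltUp (A ⟨p, hpk⟩ ∘ g) (A ⟨p + 1, hpk1⟩ ∘ g) ∨
            AltUp (A ⟨p + 1, hpk1⟩ ∘ g) (A ⟨p, hpk⟩ ∘ g) := by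
          rcases hb with h | h
          · exact Or.inl (altup_sub (hmono _) h g hg)
          · exact Or.inr (altup_sub (hmono _) h g hg)
        have e : L / 2 ^ (p + 1 - 1) = L / 2 ^ (p - 1) / 2 := by
          rw [Nat.div_div_eq_div_mul, ← pow_succ]
          congr 2
          omega
        have hm2 : 2 * (L / 2 ^ (p + 1 - 1)) ≤ L / 2 ^ (p - 1) := by
          rw [e]; omega
        obtain ⟨f1, g1, hf1, hg1, hres⟩ := chain_alt hm2 hfg hy
        exact ⟨f ∘ f1, g ∘ g1, hf.comp hf1, hg.comp hg1, hres⟩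
    obtain ⟨f, g, hf, hg, hfg⟩ := main (k - 1) (by omega) (by omega)
    have hpow : 2 ^ k = 4 * 2 ^ (k - 1 - 1) := by
      have h : k - 1 - 1 + 2 = k := by omega
      calc 2 ^ k = 2 ^ (k - 1 - 1 + 2) := by rw [h]
        _ = 4 * 2 ^ (k - 1 - 1) := by ring
    have hm4 : 4 ≤ L / 2 ^ (k - 1 - 1) := by
      rw [Nat.le_div_iff_mul_le (Nat.pow_pos (by norm_num))]
      omega
    rcases hfg with hfg | hfg
    · -- A0 below: chain a0 c0 a1 c1 a2 c2 a3
      refine seven_points huv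
        ![A ⟨0, hk⟩ (f ⟨0, by omega⟩), A ⟨k - 1, by omega⟩ (g ⟨0, by omega⟩),
          A ⟨0, hk⟩ (f ⟨1, by omega⟩), A ⟨k - 1, by omega⟩ (g ⟨1, by omega⟩),
          A ⟨0, hk⟩ (f ⟨2, by omega⟩), A ⟨k - 1, by omega⟩ (g ⟨2, by omega⟩),
          A ⟨0, hk⟩ (f ⟨3, by omega⟩)]
        ![true, false, true, false, true, false, true] ?_ ?_ ?_ ?_
      · rw [Fin.strictMono_iff_lt_succ]
        intro i
        fin_cases i
        · exact hfg.1 ⟨0, by omega⟩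
        · exact hfg.2 ⟨0, by omega⟩ ⟨1, by omega⟩ rfl
        · exact hfg.1 ⟨1, by omega⟩
        · exact hfg.2 ⟨1, by omega⟩ ⟨2, by omega⟩ rfl
        · exact hfg.1 ⟨2, by omega⟩
        · exact hfg.2 ⟨2, by omega⟩ ⟨3, by omega⟩ rfl
      · intro t
        fin_cases t <;> exact hpts _ _
      · decide
      · intro s t hs ht
        fin_cases s <;> fin_cases t <;>
          first
            | exact absurd hs (by decide)
            | exact absurd ht (by decide)
            | exact hfan _ _
    · -- AK below: chain c0 a0 c1 a1 c2 a2 c3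
      refine seven_points huv
        ![A ⟨k - 1, by omega⟩ (g ⟨0, by omega⟩), A ⟨0, hk⟩ (f ⟨0, by omega⟩),
          A ⟨k - 1, by omega⟩ (g ⟨1, by omega⟩), A ⟨0, hk⟩ (f ⟨1, by omega⟩),
          A ⟨k - 1, by omega⟩ (g ⟨2, by omega⟩), A ⟨0, hk⟩ (f ⟨2, by omega⟩),
          A ⟨k - 1, by omega⟩ (g ⟨3, by omega⟩)]
        ![false, true, false, true, false, true, false] ?_ ?_ ?_ ?_
      · rw [Fin.strictMono_iff_lt_succ]
        intro i
        fin_cases i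
        · exact hfg.1 ⟨0, by omega⟩
        · exact hfg.2 ⟨0, by omega⟩ ⟨1, by omega⟩ rfl
        · exact hfg.1 ⟨1, by omega⟩
        · exact hfg.2 ⟨1, by omega⟩ ⟨2, by omega⟩ rfl
        · exact hfg.1 ⟨2, by omega⟩
        · exact hfg.2 ⟨2, by omega⟩ ⟨3, by omega⟩ rfl
      · intro t
        fin_cases t <;> exact hpts _ _
      · decide
      · intro s t hs ht
        fin_cases s <;> fin_cases t <;>
          first
            | exact absurd hs (by decide)
            | exact absurd ht (by decide)
            | exact hfan _ _

end Aux

/-- A chain of bundled sequences (same direction, order consistent, joined by a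
non-crossing matching) whose first and last members are fanned of the same
colour (fan edges pairwise non-crossing) has length at most `2^k * 10`. -/
theorem stmt11 [LinearOrder α] {k L : ℕ} (hk : 0 < k) (A : Fin k → Fin L → α) (u v : α)
    (hdir : (∀ p, StrictMono (A p)) ∨ (∀ p, StrictAnti (A p)))
    (hbundle : ∀ (p : Fin k) (h : (p : ℕ) + 1 < k),
      ((∀ i, A p i < A ⟨(p : ℕ) + 1, h⟩ i) ∨ (∀ i, A ⟨(p : ℕ) + 1, h⟩ i < A p i)) ∧
      ∀ i j, ¬ EdgeCross (A p i) (A ⟨(p : ℕ) + 1, h⟩ i) (A p j) (A ⟨(p : ℕ) + 1, h⟩ j))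
    (hinj : Function.Injective (fun q : Fin k × Fin L => A q.1 q.2))
    (huv : u ≠ v) (hpts : ∀ p i, A p i ≠ u ∧ A p i ≠ v)
    (hfan : ∀ i j, ¬ EdgeCross (A ⟨0, hk⟩ i) u (A ⟨k - 1, Nat.sub_lt hk Nat.one_pos⟩ j) v) :
    L ≤ 2 ^ k * 10 := by
  rcases hdir with hmono | hanti
  · exact stmt11_mono hk A u v hmono hbundle hinj huv hpts hfan
  · refine stmt11_mono (α := αᵒᵈ) hk (fun p i => OrderDual.toDual (A p i))
      (OrderDual.toDual u) (OrderDual.toDual v) (fun p => (hanti p).dual_right) ?_ ?_ ?_ ?_ ?_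
    · intro p h
      obtain ⟨hd, hcr⟩ := hbundle p h
      constructor
      · rcases hd with hd | hd
        · exact Or.inr (fun i => OrderDual.toDual_lt_toDual.mpr (hd i))
        · exact Or.inl (fun i => OrderDual.toDual_lt_toDual.mpr (hd i))
      · intro i j hc
        exact hcr i j (ec_dual.mp hc)
    · intro q q' h
      exact hinj (OrderDual.toDual.injective h)
    · intro h
      exact huv (OrderDual.toDual.injective h)
    · intro p i
      exact ⟨fun h => (hpts p i).1 (OrderDual.toDual.injective h),
        fun h => (hpts p i).2 (OrderDual.toDual.injective h)⟩
    · intro i j hc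
      exact hfan i j (ec_dual.mp hc)
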